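/- With the averaging reward Φ_g(S) = (1/m)∑_{k∈S} g_k and Φ_p(S) = (1/m)∑_{k∈S} p_k, the set maximizing min_{k∈S} ucb(k) + (α/m)∑_{k∈S} g_k + (γ/m)∑_{k∈S} p_k over m-subsets S ⊆ K can be found as follows: for each candidate pivot k (the ucb-minimizer of the chosen set), the optimal completion consists of the m−1 users with the largest values of α g_ℓ + γ p_ℓ among users ℓ with ucb(ℓ) ≥ ucb(k). The maximum over all pivots of pivot-plus-best-completion equals the global maximum. -/

import Mathlib

/-- Correctness of Pivot-and-Fill (Proposition 1): with the averaging reward, the maximum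
of `f(S) = min_{k∈S} ucb(k) + (1/m)∑_{k∈S}(α g_k + γ p_k)` over `m`-subsets equals the
maximum over pivots `k` of `ucb(k)` plus the value of the best completion, where the best
completion is a size-`(m−1)` subset of `{ℓ ≠ k : ucb(ℓ) ≥ ucb(k)}` maximizing
`∑ (α g_ℓ + γ p_ℓ)`. -/
theorem stmt_12 {ι : Type*} [Fintype ι] [DecidableEq ι]
    (ucb g p : ι → ℝ) (α γ : ℝ) (hα : 0 ≤ α) (hγ : 0 ≤ γ)
    (hinj : Function.Injective ucb)
    (m : ℕ) (hm : 1 ≤ m) (hmK : m ≤ Fintype.card ι) :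
    sSup {x : ℝ | ∃ S : Finset ι, S.card = m ∧
        x = sInf (ucb '' ↑S) + (1 / (m : ℝ)) * ∑ ℓ ∈ S, (α * g ℓ + γ * p ℓ)}
      = sSup {x : ℝ | ∃ (k : ι) (T : Finset ι),
          T.card = m - 1 ∧
          (∀ ℓ ∈ T, ℓ ≠ k ∧ ucb k ≤ ucb ℓ) ∧
          (∀ T' : Finset ι, T'.card = m - 1 → (∀ ℓ ∈ T', ℓ ≠ k ∧ ucb k ≤ ucb ℓ) →
            ∑ ℓ ∈ T', (α * g ℓ + γ * p ℓ) ≤ ∑ ℓ ∈ T, (α * g ℓ + γ * p ℓ)) ∧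
          x = ucb k + (1 / (m : ℝ)) *
                (α * g k + γ * p k + ∑ ℓ ∈ T, (α * g ℓ + γ * p ℓ))} := by
  classical
  set w : ι → ℝ := fun ℓ => α * g ℓ + γ * p ℓ with hw
  set A : Set ℝ := {x : ℝ | ∃ S : Finset ι, S.card = m ∧
        x = sInf (ucb '' ↑S) + (1 / (m : ℝ)) * ∑ ℓ ∈ S, w ℓ} with hA
  set B : Set ℝ := {x : ℝ | ∃ (k : ι) (T : Finset ι),
          T.card = m - 1 ∧
          (∀ ℓ ∈ T, ℓ ≠ k ∧ ucb k ≤ ucb ℓ) ∧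
          (∀ T' : Finset ι, T'.card = m - 1 → (∀ ℓ ∈ T', ℓ ≠ k ∧ ucb k ≤ ucb ℓ) →
            ∑ ℓ ∈ T', w ℓ ≤ ∑ ℓ ∈ T, w ℓ) ∧
          x = ucb k + (1 / (m : ℝ)) * (w k + ∑ ℓ ∈ T, w ℓ)} with hB
  -- finiteness hence bddAbove
  have hAfin : A.Finite := by
    apply Set.Finite.subset (Set.finite_range
      (fun S : Finset ι => sInf (ucb '' ↑S) + (1 / (m : ℝ)) * ∑ ℓ ∈ S, w ℓ))
    rintro x ⟨S, -, rfl⟩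
    exact ⟨S, rfl⟩
  have hBfin : B.Finite := by
    apply Set.Finite.subset (Set.finite_range
      (fun kT : ι × Finset ι => ucb kT.1 + (1 / (m : ℝ)) * (w kT.1 + ∑ ℓ ∈ kT.2, w ℓ)))
    rintro x ⟨k, T, -, -, -, rfl⟩
    exact ⟨(k, T), rfl⟩
  -- B ⊆ A
  have hBA : B ⊆ A := by
    rintro x ⟨k, T, hTcard, hTprop, -, rfl⟩
    have hkT : k ∉ T := fun hk => (hTprop k hk).1 rfl
    refine ⟨insert k T, ?_, ?_⟩
    · rw [Finset.card_insert_of_notMem hkT, hTcard]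
      omega
    · have hinf : sInf (ucb '' ↑(insert k T)) = ucb k := by
        apply IsLeast.csInf_eq
        constructor
        · exact ⟨k, by simp, rfl⟩
        · rintro y ⟨ℓ, hℓ, rfl⟩
          simp only [Finset.coe_insert, Set.mem_insert_iff, Finset.mem_coe] at hℓ
          rcases hℓ with rfl | hℓ
          · exact le_refl _
          · exact (hTprop ℓ hℓ).2
      rw [hinf, Finset.sum_insert hkT]
  -- key lemma: every element of A is ≤ some element of B
  have hdom : ∀ x ∈ A, ∃ y ∈ B, x ≤ y := by
    rintro x ⟨S, hScard, rfl⟩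
    have hSne : S.Nonempty := Finset.card_pos.mp (by omega)
    obtain ⟨k, hkS, hkmin⟩ := S.exists_min_image ucb hSne
    have hinf : sInf (ucb '' ↑S) = ucb k := by
      apply IsLeast.csInf_eq
      exact ⟨⟨k, hkS, rfl⟩, by rintro y ⟨ℓ, hℓ, rfl⟩; exact hkmin ℓ hℓ⟩
    set F : Finset ι := Finset.univ.filter (fun ℓ => ℓ ≠ k ∧ ucb k ≤ ucb ℓ) with hF
    set C : Finset (Finset ι) := Finset.powersetCard (m - 1) F with hC
    have hT'C : S.erase k ∈ C := by
      rw [hC, Finset.mem_powersetCard]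
      constructor
      · intro ℓ hℓ
        rw [hF, Finset.mem_filter]
        exact ⟨Finset.mem_univ _, Finset.ne_of_mem_erase hℓ,
          hkmin ℓ (Finset.mem_of_mem_erase hℓ)⟩
      · rw [Finset.card_erase_of_mem hkS, hScard]
    obtain ⟨T, hTC, hTmax⟩ := C.exists_max_image (fun T => ∑ ℓ ∈ T, w ℓ) ⟨_, hT'C⟩
    rw [hC, Finset.mem_powersetCard] at hTC
    obtain ⟨hTF, hTcard⟩ := hTC
    have hTprop : ∀ ℓ ∈ T, ℓ ≠ k ∧ ucb k ≤ ucb ℓ := by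
      intro ℓ hℓ
      have := hTF hℓ
      rw [hF, Finset.mem_filter] at this
      exact this.2
    refine ⟨ucb k + (1 / (m : ℝ)) * (w k + ∑ ℓ ∈ T, w ℓ), ⟨k, T, hTcard, hTprop, ?_, rfl⟩, ?_⟩
    · intro T' hT'card hT'prop
      apply hTmax
      rw [hC, Finset.mem_powersetCard]
      refine ⟨fun ℓ hℓ => ?_, hT'card⟩
      rw [hF, Finset.mem_filter]
      exact ⟨Finset.mem_univ _, hT'prop ℓ hℓ⟩
    · rw [hinf]
      have hsum : ∑ ℓ ∈ S, w ℓ = w k + ∑ ℓ ∈ S.erase k, w ℓ :=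
        (Finset.add_sum_erase S w hkS).symm
      rw [hsum]
      have h1 : (0:ℝ) ≤ 1 / (m : ℝ) := by positivity
      have h2 : ∑ ℓ ∈ S.erase k, w ℓ ≤ ∑ ℓ ∈ T, w ℓ := hTmax _ hT'C
      nlinarith
  -- nonemptiness
  obtain ⟨S0, hS0sub, hS0card⟩ := Finset.exists_subset_card_eq (s := (Finset.univ : Finset ι)) (n := m)
    (by simpa using hmK)
  have hAne : A.Nonempty := ⟨_, S0, hS0card, rfl⟩
  obtain ⟨y0, hy0B, -⟩ := hdom _ hAne.choose_spec
  have hBne : B.Nonempty := ⟨y0, hy0B⟩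
  apply le_antisymm
  · apply csSup_le hAne
    intro x hx
    obtain ⟨y, hyB, hxy⟩ := hdom x hx
    exact hxy.trans (le_csSup hBfin.bddAbove hyB)
  · exact csSup_le_csSup hAfin.bddAbove hBne hBA
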